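/- For the parametrization Φ of Example 5: ∂²Φ/∂u_i∂u_j = 0 whenever i ≤ 4 or j ≤ 4; ∂²Φ/∂u5∂u5 + ∂²Φ/∂u6∂u6 = 0 and ∂²Φ/∂u7∂u7 + ∂²Φ/∂u8∂u8 = 0; and ḡ(Z5, Z6) = 0, ḡ(Z5, Z5) = ḡ(Z6, Z6), ḡ(Z7, Z8) = 0, ḡ(Z7, Z7) = ḡ(Z8, Z8). (These identities imply that the trace of the second fundamental form over the screen distribution vanishes, i.e. Example 5 is a minimal, non-totally-geodesic STCR lightlike submanifold.) -/
import Mathlib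


noncomputable section

/-- The semi-Euclidean metric of index 4 on `ℝ¹⁴`:
`ḡ(x,y) = −x₁y₁ − x₂y₂ − x₃y₃ − x₄y₄ + Σ_{i=5}^{14} xᵢyᵢ`. -/
def gbar : LinearMap.BilinForm ℝ (Fin 14 → ℝ) :=
  LinearMap.mk₂ ℝ
    (fun x y => -(x 0 * y 0) - x 1 * y 1 - x 2 * y 2 - x 3 * y 3
      + x 4 * y 4 + x 5 * y 5 + x 6 * y 6 + x 7 * y 7 + x 8 * y 8
      + x 9 * y 9 + x 10 * y 10 + x 11 * y 11 + x 12 * y 12 + x 13 * y 13)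
    (fun _ _ _ => by simp only [Pi.add_apply]; ring)
    (fun _ _ _ => by simp only [Pi.smul_apply, smul_eq_mul]; ring)
    (fun _ _ _ => by simp only [Pi.add_apply]; ring)
    (fun _ _ _ => by simp only [Pi.smul_apply, smul_eq_mul]; ring)

/-- The standard complex structure on `ℝ¹⁴`:
`J(x₁,x₂,…,x₁₃,x₁₄) = (−x₂,x₁,…,−x₁₄,x₁₃)`. -/
def Jmap (x : Fin 14 → ℝ) : Fin 14 → ℝ :=
  ![-(x 1), x 0, -(x 3), x 2, -(x 5), x 4, -(x 7), x 6, -(x 9), x 8,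
    -(x 11), x 10, -(x 13), x 12]

/-- The parametrization of the submanifold of Example 5 (with parameter `α`). -/
def Φ (α : ℝ) (u : Fin 8 → ℝ) : Fin 14 → ℝ :=
  ![u 0 * Real.sinh α + u 1 * Real.cosh α,
    (u 2 + u 3 / 2) * Real.sinh α,
    u 0,
    u 2 - u 3 / 2,
    u 1,
    0,
    Real.cos (u 4) * Real.cosh (u 5),
    Real.sin (u 4) * Real.sinh (u 5),
    u 0 * Real.cosh α + u 1 * Real.sinh α,
    (u 2 + u 3 / 2) * Real.cosh α,
    -(Real.sin (u 6) * Real.cosh (u 7)),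
    Real.cos (u 6) * Real.sinh (u 7),
    -(u 6 + u 7),
    u 6 - u 7]

/-- The coordinate tangent vectors `Z_i = ∂Φ/∂u_i`. -/
def Z (α : ℝ) (u : Fin 8 → ℝ) (i : Fin 8) : Fin 14 → ℝ :=
  fderiv ℝ (Φ α) u (Pi.single i 1)

/-- The second partial derivatives `∂²Φ/∂u_i∂u_j`. -/
def ZZ (α : ℝ) (u : Fin 8 → ℝ) (i j : Fin 8) : Fin 14 → ℝ :=
  fderiv ℝ (fun v => fderiv ℝ (Φ α) v (Pi.single i 1)) u (Pi.single j 1)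

/-! ### Auxiliary machinery -/

/-- Standard basis vectors of `ℝ¹⁴`. -/
def e (k : Fin 14) : Fin 14 → ℝ := Pi.single k 1

abbrev pr (i : Fin 8) : (Fin 8 → ℝ) →L[ℝ] ℝ := ContinuousLinearMap.proj i

lemma Phi_eq (α : ℝ) : Φ α = fun v =>
    (v 0 * Real.sinh α + v 1 * Real.cosh α) • e 0
    + ((v 2 + v 3 * (2:ℝ)⁻¹) * Real.sinh α) • e 1
    + v 0 • e 2 + (v 2 - v 3 * (2:ℝ)⁻¹) • e 3 + v 1 • e 4
    + (Real.cos (v 4) * Real.cosh (v 5)) • e 6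
    + (Real.sin (v 4) * Real.sinh (v 5)) • e 7
    + (v 0 * Real.cosh α + v 1 * Real.sinh α) • e 8
    + ((v 2 + v 3 * (2:ℝ)⁻¹) * Real.cosh α) • e 9
    + (-(Real.sin (v 6) * Real.cosh (v 7))) • e 10
    + (Real.cos (v 6) * Real.sinh (v 7)) • e 11
    + (-(v 6 + v 7)) • e 12 + (v 6 - v 7) • e 13 := by
  funext v
  have h0 : Φ α v 0 = v 0 * Real.sinh α + v 1 * Real.cosh α := rfl
  have h1 : Φ α v 1 = (v 2 + v 3 / 2) * Real.sinh α := rfl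
  have h2 : Φ α v 2 = v 0 := rfl
  have h3 : Φ α v 3 = v 2 - v 3 / 2 := rfl
  have h4 : Φ α v 4 = v 1 := rfl
  have h5 : Φ α v 5 = 0 := rfl
  have h6 : Φ α v 6 = Real.cos (v 4) * Real.cosh (v 5) := rfl
  have h7 : Φ α v 7 = Real.sin (v 4) * Real.sinh (v 5) := rfl
  have h8 : Φ α v 8 = v 0 * Real.cosh α + v 1 * Real.sinh α := rfl
  have h9 : Φ α v 9 = (v 2 + v 3 / 2) * Real.cosh α := rfl
  have h10 : Φ α v 10 = -(Real.sin (v 6) * Real.cosh (v 7)) := rfl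
  have h11 : Φ α v 11 = Real.cos (v 6) * Real.sinh (v 7) := rfl
  have h12 : Φ α v 12 = -(v 6 + v 7) := rfl
  have h13 : Φ α v 13 = v 6 - v 7 := rfl
  funext k
  fin_cases k <;>
    simp [h0, h1, h2, h3, h4, h5, h6, h7, h8, h9, h10, h11, h12, h13,
      e, Pi.single_apply, -mul_eq_mul_right_iff, -mul_eq_mul_left_iff] <;> try ring

/-- The full first derivative of `Φ` in an arbitrary direction `y`. -/
lemma fderiv_Phi (α : ℝ) (v y : Fin 8 → ℝ) :
    fderiv ℝ (Φ α) v y =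
      (y 0 * Real.sinh α + y 1 * Real.cosh α) • e 0
      + ((y 2 + y 3 * (2:ℝ)⁻¹) * Real.sinh α) • e 1
      + y 0 • e 2 + (y 2 - y 3 * (2:ℝ)⁻¹) • e 3 + y 1 • e 4
      + ((-Real.sin (v 4) * Real.cosh (v 5)) * y 4
          + (Real.cos (v 4) * Real.sinh (v 5)) * y 5) • e 6
      + ((Real.cos (v 4) * Real.sinh (v 5)) * y 4
          + (Real.sin (v 4) * Real.cosh (v 5)) * y 5) • e 7
      + (y 0 * Real.cosh α + y 1 * Real.sinh α) • e 8
      + ((y 2 + y 3 * (2:ℝ)⁻¹) * Real.cosh α) • e 9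
      + ((-Real.cos (v 6) * Real.cosh (v 7)) * y 6
          + (-Real.sin (v 6) * Real.sinh (v 7)) * y 7) • e 10
      + ((-Real.sin (v 6) * Real.sinh (v 7)) * y 6
          + (Real.cos (v 6) * Real.cosh (v 7)) * y 7) • e 11
      + (-(y 6 + y 7)) • e 12 + (y 6 - y 7) • e 13 := by
  rw [Phi_eq α]
  have h : ∀ i : Fin 8, HasFDerivAt (fun w : Fin 8 → ℝ => w i) (pr i) v :=
    fun i => hasFDerivAt_apply i v
  have hcos4 := (Real.hasDerivAt_cos (v 4)).comp_hasFDerivAt v (h 4)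
  have hsin4 := (Real.hasDerivAt_sin (v 4)).comp_hasFDerivAt v (h 4)
  have hcosh5 := (Real.hasDerivAt_cosh (v 5)).comp_hasFDerivAt v (h 5)
  have hsinh5 := (Real.hasDerivAt_sinh (v 5)).comp_hasFDerivAt v (h 5)
  have hcos6 := (Real.hasDerivAt_cos (v 6)).comp_hasFDerivAt v (h 6)
  have hsin6 := (Real.hasDerivAt_sin (v 6)).comp_hasFDerivAt v (h 6)
  have hcosh7 := (Real.hasDerivAt_cosh (v 7)).comp_hasFDerivAt v (h 7)
  have hsinh7 := (Real.hasDerivAt_sinh (v 7)).comp_hasFDerivAt v (h 7)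
  have hD := (((((((((((((((h 0).mul_const (Real.sinh α)).add
      ((h 1).mul_const (Real.cosh α))).smul_const (e 0)).add
      ((((h 2).add ((h 3).mul_const (2:ℝ)⁻¹)).mul_const (Real.sinh α)).smul_const (e 1))).add
      ((h 0).smul_const (e 2))).add
      (((h 2).sub ((h 3).mul_const (2:ℝ)⁻¹)).smul_const (e 3))).add
      ((h 1).smul_const (e 4))).add ((hcos4.mul hcosh5).smul_const (e 6))).add
      ((hsin4.mul hsinh5).smul_const (e 7))).add
      ((((h 0).mul_const (Real.cosh α)).add ((h 1).mul_const (Real.sinh α))).smul_const (e 8))).add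
      ((((h 2).add ((h 3).mul_const (2:ℝ)⁻¹)).mul_const (Real.cosh α)).smul_const (e 9))).add
      (((hsin6.mul hcosh7).neg).smul_const (e 10))).add
      ((hcos6.mul hsinh7).smul_const (e 11))).add
      ((((h 6).add (h 7)).neg.smul_const (e 12)))).add
      (((h 6).sub (h 7)).smul_const (e 13))
  refine (congrArg (fun (L : (Fin 8 → ℝ) →L[ℝ] (Fin 14 → ℝ)) => L y) hD.fderiv).trans ?_
  funext k
  simp [e, Pi.single_apply]
  ring

lemma key4 (α : ℝ) : (fun v => fderiv ℝ (Φ α) v (Pi.single 4 1)) =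
    fun v : Fin 8 → ℝ =>
      (-Real.sin (v 4) * Real.cosh (v 5)) • e 6 + (Real.cos (v 4) * Real.sinh (v 5)) • e 7 := by
  funext v
  rw [fderiv_Phi]
  funext k
  simp [e, Pi.single_apply]

lemma key5 (α : ℝ) : (fun v => fderiv ℝ (Φ α) v (Pi.single 5 1)) =
    fun v : Fin 8 → ℝ =>
      (Real.cos (v 4) * Real.sinh (v 5)) • e 6 + (Real.sin (v 4) * Real.cosh (v 5)) • e 7 := by
  funext v
  rw [fderiv_Phi]
  funext k
  simp [e, Pi.single_apply]

lemma key6 (α : ℝ) : (fun v => fderiv ℝ (Φ α) v (Pi.single 6 1)) =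
    fun v : Fin 8 → ℝ =>
      (-Real.cos (v 6) * Real.cosh (v 7)) • e 10 + (-Real.sin (v 6) * Real.sinh (v 7)) • e 11
        + (-1 : ℝ) • e 12 + e 13 := by
  funext v
  rw [fderiv_Phi]
  funext k
  simp [e, Pi.single_apply]

lemma key7 (α : ℝ) : (fun v => fderiv ℝ (Φ α) v (Pi.single 7 1)) =
    fun v : Fin 8 → ℝ =>
      (-Real.sin (v 6) * Real.sinh (v 7)) • e 10 + (Real.cos (v 6) * Real.cosh (v 7)) • e 11
        + (-1 : ℝ) • e 12 + (-1 : ℝ) • e 13 := by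
  funext v
  rw [fderiv_Phi]
  funext k
  simp [e, Pi.single_apply]

lemma key0 (α : ℝ) : (fun v => fderiv ℝ (Φ α) v (Pi.single 0 1)) =
    fun _ : Fin 8 → ℝ => Real.sinh α • e 0 + e 2 + Real.cosh α • e 8 := by
  funext v
  rw [fderiv_Phi]
  funext k
  simp [e, Pi.single_apply]

lemma key1 (α : ℝ) : (fun v => fderiv ℝ (Φ α) v (Pi.single 1 1)) =
    fun _ : Fin 8 → ℝ => Real.cosh α • e 0 + e 4 + Real.sinh α • e 8 := by
  funext v
  rw [fderiv_Phi]
  funext k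
  simp [e, Pi.single_apply]

lemma key2 (α : ℝ) : (fun v => fderiv ℝ (Φ α) v (Pi.single 2 1)) =
    fun _ : Fin 8 → ℝ => Real.sinh α • e 1 + e 3 + Real.cosh α • e 9 := by
  funext v
  rw [fderiv_Phi]
  funext k
  simp [e, Pi.single_apply]

lemma key3 (α : ℝ) : (fun v => fderiv ℝ (Φ α) v (Pi.single 3 1)) =
    fun _ : Fin 8 → ℝ => ((2:ℝ)⁻¹ * Real.sinh α) • e 1 + (-(2:ℝ)⁻¹) • e 3
      + ((2:ℝ)⁻¹ * Real.cosh α) • e 9 := by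
  funext v
  rw [fderiv_Phi]
  funext k
  simp [e, Pi.single_apply]
  try ring

/-- Derivative of the `Z₅`-field. -/
lemma fderiv_F4 (α : ℝ) (u y : Fin 8 → ℝ) :
    fderiv ℝ (fun v : Fin 8 → ℝ =>
      (-Real.sin (v 4) * Real.cosh (v 5)) • e 6 + (Real.cos (v 4) * Real.sinh (v 5)) • e 7) u y =
    ((-Real.cos (u 4) * Real.cosh (u 5)) * y 4 + (-Real.sin (u 4) * Real.sinh (u 5)) * y 5) • e 6
    + ((-Real.sin (u 4) * Real.sinh (u 5)) * y 4 + (Real.cos (u 4) * Real.cosh (u 5)) * y 5) • e 7 := by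
  have h : ∀ i : Fin 8, HasFDerivAt (fun w : Fin 8 → ℝ => w i) (pr i) u :=
    fun i => hasFDerivAt_apply i u
  have hcos4 := (Real.hasDerivAt_cos (u 4)).comp_hasFDerivAt u (h 4)
  have hsin4 := (Real.hasDerivAt_sin (u 4)).comp_hasFDerivAt u (h 4)
  have hcosh5 := (Real.hasDerivAt_cosh (u 5)).comp_hasFDerivAt u (h 5)
  have hsinh5 := (Real.hasDerivAt_sinh (u 5)).comp_hasFDerivAt u (h 5)
  have hD := ((hsin4.neg.mul hcosh5).smul_const (e 6)).add
    ((hcos4.mul hsinh5).smul_const (e 7))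
  refine (congrArg (fun (L : (Fin 8 → ℝ) →L[ℝ] (Fin 14 → ℝ)) => L y) hD.fderiv).trans ?_
  funext k
  simp [e, Pi.single_apply]
  ring

lemma fderiv_F5 (α : ℝ) (u y : Fin 8 → ℝ) :
    fderiv ℝ (fun v : Fin 8 → ℝ =>
      (Real.cos (v 4) * Real.sinh (v 5)) • e 6 + (Real.sin (v 4) * Real.cosh (v 5)) • e 7) u y =
    ((-Real.sin (u 4) * Real.sinh (u 5)) * y 4 + (Real.cos (u 4) * Real.cosh (u 5)) * y 5) • e 6
    + ((Real.cos (u 4) * Real.cosh (u 5)) * y 4 + (Real.sin (u 4) * Real.sinh (u 5)) * y 5) • e 7 := by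
  have h : ∀ i : Fin 8, HasFDerivAt (fun w : Fin 8 → ℝ => w i) (pr i) u :=
    fun i => hasFDerivAt_apply i u
  have hcos4 := (Real.hasDerivAt_cos (u 4)).comp_hasFDerivAt u (h 4)
  have hsin4 := (Real.hasDerivAt_sin (u 4)).comp_hasFDerivAt u (h 4)
  have hcosh5 := (Real.hasDerivAt_cosh (u 5)).comp_hasFDerivAt u (h 5)
  have hsinh5 := (Real.hasDerivAt_sinh (u 5)).comp_hasFDerivAt u (h 5)
  have hD := ((hcos4.mul hsinh5).smul_const (e 6)).add
    ((hsin4.mul hcosh5).smul_const (e 7))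
  refine (congrArg (fun (L : (Fin 8 → ℝ) →L[ℝ] (Fin 14 → ℝ)) => L y) hD.fderiv).trans ?_
  funext k
  simp [e, Pi.single_apply]
  ring

lemma fderiv_F6 (α : ℝ) (u y : Fin 8 → ℝ) :
    fderiv ℝ (fun v : Fin 8 → ℝ =>
      (-Real.cos (v 6) * Real.cosh (v 7)) • e 10 + (-Real.sin (v 6) * Real.sinh (v 7)) • e 11
        + (-1 : ℝ) • e 12 + e 13) u y =
    ((Real.sin (u 6) * Real.cosh (u 7)) * y 6 + (-Real.cos (u 6) * Real.sinh (u 7)) * y 7) • e 10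
    + ((-Real.cos (u 6) * Real.sinh (u 7)) * y 6 + (-Real.sin (u 6) * Real.cosh (u 7)) * y 7) • e 11 := by
  have h : ∀ i : Fin 8, HasFDerivAt (fun w : Fin 8 → ℝ => w i) (pr i) u :=
    fun i => hasFDerivAt_apply i u
  have hcos6 := (Real.hasDerivAt_cos (u 6)).comp_hasFDerivAt u (h 6)
  have hsin6 := (Real.hasDerivAt_sin (u 6)).comp_hasFDerivAt u (h 6)
  have hcosh7 := (Real.hasDerivAt_cosh (u 7)).comp_hasFDerivAt u (h 7)
  have hsinh7 := (Real.hasDerivAt_sinh (u 7)).comp_hasFDerivAt u (h 7)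
  have hD := ((((hcos6.neg.mul hcosh7).smul_const (e 10)).add
    ((hsin6.neg.mul hsinh7).smul_const (e 11))).add
    ((hasFDerivAt_const ((-1:ℝ) • e 12) u))).add (hasFDerivAt_const (e 13) u)
  refine (congrArg (fun (L : (Fin 8 → ℝ) →L[ℝ] (Fin 14 → ℝ)) => L y) hD.fderiv).trans ?_
  funext k
  simp [e, Pi.single_apply]
  ring

lemma fderiv_F7 (α : ℝ) (u y : Fin 8 → ℝ) :
    fderiv ℝ (fun v : Fin 8 → ℝ =>
      (-Real.sin (v 6) * Real.sinh (v 7)) • e 10 + (Real.cos (v 6) * Real.cosh (v 7)) • e 11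
        + (-1 : ℝ) • e 12 + (-1 : ℝ) • e 13) u y =
    ((-Real.cos (u 6) * Real.sinh (u 7)) * y 6 + (-Real.sin (u 6) * Real.cosh (u 7)) * y 7) • e 10
    + ((-Real.sin (u 6) * Real.cosh (u 7)) * y 6 + (Real.cos (u 6) * Real.sinh (u 7)) * y 7) • e 11 := by
  have h : ∀ i : Fin 8, HasFDerivAt (fun w : Fin 8 → ℝ => w i) (pr i) u :=
    fun i => hasFDerivAt_apply i u
  have hcos6 := (Real.hasDerivAt_cos (u 6)).comp_hasFDerivAt u (h 6)
  have hsin6 := (Real.hasDerivAt_sin (u 6)).comp_hasFDerivAt u (h 6)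
  have hcosh7 := (Real.hasDerivAt_cosh (u 7)).comp_hasFDerivAt u (h 7)
  have hsinh7 := (Real.hasDerivAt_sinh (u 7)).comp_hasFDerivAt u (h 7)
  have hD := ((((hsin6.neg.mul hsinh7).smul_const (e 10)).add
    ((hcos6.mul hcosh7).smul_const (e 11))).add
    ((hasFDerivAt_const ((-1:ℝ) • e 12) u))).add (hasFDerivAt_const ((-1:ℝ) • e 13) u)
  refine (congrArg (fun (L : (Fin 8 → ℝ) →L[ℝ] (Fin 14 → ℝ)) => L y) hD.fderiv).trans ?_
  funext k
  simp [e, Pi.single_apply]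
  ring

theorem example5_is_minimal (α : ℝ) (u : Fin 8 → ℝ) :
    (∀ i j : Fin 8, (i.val ≤ 3 ∨ j.val ≤ 3) → ZZ α u i j = 0) ∧
    ZZ α u 4 4 + ZZ α u 5 5 = 0 ∧
    ZZ α u 6 6 + ZZ α u 7 7 = 0 ∧
    gbar (Z α u 4) (Z α u 5) = 0 ∧
    gbar (Z α u 4) (Z α u 4) = gbar (Z α u 5) (Z α u 5) ∧
    gbar (Z α u 6) (Z α u 7) = 0 ∧
    gbar (Z α u 6) (Z α u 6) = gbar (Z α u 7) (Z α u 7) := by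
  refine ⟨?_, ?_, ?_, ?_, ?_, ?_, ?_⟩
  · intro i j hij
    fin_cases i
    · show ZZ α u 0 j = 0
      simp [ZZ, key0 α]
    · show ZZ α u 1 j = 0
      simp [ZZ, key1 α]
    · show ZZ α u 2 j = 0
      simp [ZZ, key2 α]
    · show ZZ α u 3 j = 0
      simp [ZZ, key3 α]
    · show ZZ α u 4 j = 0
      have hj : j.val ≤ 3 := by simpa using hij
      simp only [ZZ, key4 α, fderiv_F4 α u]
      fin_cases j <;> simp_all [e, Pi.single_apply]
    · show ZZ α u 5 j = 0
      have hj : j.val ≤ 3 := by simpa using hij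
      simp only [ZZ, key5 α, fderiv_F5 α u]
      fin_cases j <;> simp_all [e, Pi.single_apply]
    · show ZZ α u 6 j = 0
      have hj : j.val ≤ 3 := by simpa using hij
      simp only [ZZ, key6 α, fderiv_F6 α u]
      fin_cases j <;> simp_all [e, Pi.single_apply]
    · show ZZ α u 7 j = 0
      have hj : j.val ≤ 3 := by simpa using hij
      simp only [ZZ, key7 α, fderiv_F7 α u]
      fin_cases j <;> simp_all [e, Pi.single_apply]
  · simp only [ZZ, key4 α, key5 α, fderiv_F4 α u, fderiv_F5 α u]
    funext k
    simp [e, Pi.single_apply]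
    ring
  · simp only [ZZ, key6 α, key7 α, fderiv_F6 α u, fderiv_F7 α u]
    funext k
    simp [e, Pi.single_apply]
    ring
  · simp only [Z, fderiv_Phi α u, gbar, LinearMap.mk₂_apply]
    simp [e, Pi.single_apply]
    ring
  · simp only [Z, fderiv_Phi α u, gbar, LinearMap.mk₂_apply]
    simp [e, Pi.single_apply]
    ring
  · simp only [Z, fderiv_Phi α u, gbar, LinearMap.mk₂_apply]
    simp [e, Pi.single_apply]
    ring
  · simp only [Z, fderiv_Phi α u, gbar, LinearMap.mk₂_apply]
    simp [e, Pi.single_apply]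
    ring
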